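/- Suppose jobs with sizes p1 > p2 > ... > pn > 0 (n ≥ 3) and total sum S = 12 are scheduled on two machines by the rule: assign Ji to M1 if the current load of M1 plus pi is at most 7, otherwise to M2. If additionally either p1 > 7 or 5 < p1 ≤ 7, then the resulting makespan is at most (7/6) times the optimal makespan max(6, p1). -/

import Mathlib

/-- Final loads of the two machines under algorithm I2DS with threshold (7/12)·Sum = 7:
each job goes to M1 if its load stays at most 7, otherwise to M2. -/
noncomputable def loadsI2DS (ps : List ℝ) : ℝ × ℝ :=
  ps.foldl (fun l p => if l.1 + p ≤ 7 then (l.1 + p, l.2) else (l.1, l.2 + p)) (0, 0)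

private noncomputable def i2dsStep : ℝ × ℝ → ℝ → ℝ × ℝ :=
  fun l p => if l.1 + p ≤ 7 then (l.1 + p, l.2) else (l.1, l.2 + p)

private lemma fold_sum (ps : List ℝ) : ∀ l : ℝ × ℝ,
    (ps.foldl i2dsStep l).1 + (ps.foldl i2dsStep l).2 = l.1 + l.2 + ps.sum := by
  induction ps with
  | nil => intro l; simp
  | cons p t ih =>
    intro l
    simp only [List.foldl_cons, List.sum_cons]
    rw [ih]
    unfold i2dsStep
    split <;> simp <;> ring

private lemma fold_fst_le (ps : List ℝ) : ∀ l : ℝ × ℝ, l.1 ≤ 7 →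
    (ps.foldl i2dsStep l).1 ≤ 7 := by
  induction ps with
  | nil => intro l h; simpa using h
  | cons p t ih =>
    intro l h
    simp only [List.foldl_cons]
    apply ih
    unfold i2dsStep
    split <;> simpa [*]

private lemma fold_fst_ge (ps : List ℝ) : ∀ l : ℝ × ℝ, (∀ p ∈ ps, 0 ≤ p) →
    l.1 ≤ (ps.foldl i2dsStep l).1 := by
  induction ps with
  | nil => intro l _; simp
  | cons p t ih =>
    intro l hpos
    simp only [List.foldl_cons]
    refine le_trans ?_ (ih _ (fun x hx => hpos x (List.mem_cons_of_mem _ hx)))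
    have hp : 0 ≤ p := hpos p List.mem_cons_self
    unfold i2dsStep
    split <;> simp <;> linarith

private lemma fold_all_fit (ps : List ℝ) : ∀ l : ℝ × ℝ, (∀ p ∈ ps, 0 ≤ p) →
    l.1 + ps.sum ≤ 7 → ps.foldl i2dsStep l = (l.1 + ps.sum, l.2) := by
  induction ps with
  | nil => intro l _ _; simp
  | cons p t ih =>
    intro l hpos h
    simp only [List.foldl_cons, List.sum_cons]
    have htpos : 0 ≤ t.sum := List.sum_nonneg (fun x hx => hpos x (List.mem_cons_of_mem _ hx))
    have hfit : l.1 + p ≤ 7 := by simp only [List.sum_cons] at h; linarith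
    rw [show i2dsStep l p = (l.1 + p, l.2) from if_pos hfit,
      ih (l.1 + p, l.2) (fun x hx => hpos x (List.mem_cons_of_mem _ hx))
        (by simp only [List.sum_cons] at h; simpa [add_assoc] using h)]
    simp [add_assoc]

/-- strictly decreasing positive jobs (n ≥ 3) summing to 12 and
either p1 > 7 or 5 < p1 ≤ 7: the makespan of I2DS is at most (7/6)·max(6, p1). -/
theorem stmt10 (ps : List ℝ) (hlen : 3 ≤ ps.length)
    (hsorted : ps.Pairwise (· > ·)) (hpos : ∀ p ∈ ps, 0 < p) (hsum : ps.sum = 12)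
    (hp1 : ps.headI > 7 ∨ (5 < ps.headI ∧ ps.headI ≤ 7)) :
    max (loadsI2DS ps).1 (loadsI2DS ps).2 ≤ (7 / 6) * max 6 ps.headI := by
  obtain ⟨p1, rest, rfl⟩ : ∃ p r, ps = p :: r := by
    cases ps with
    | nil => simp at hlen
    | cons a t => exact ⟨a, t, rfl⟩
  simp only [List.headI] at hp1 ⊢
  have hrsum : rest.sum = 12 - p1 := by simp only [List.sum_cons] at hsum; linarith
  have hrpos : ∀ p ∈ rest, 0 ≤ p := fun x hx =>
    le_of_lt (hpos x (List.mem_cons_of_mem _ hx))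
  have hload : loadsI2DS (p1 :: rest) = rest.foldl i2dsStep (i2dsStep (0, 0) p1) := rfl
  rcases hp1 with h7 | ⟨h5, h7⟩
  · -- p1 > 7
    have hstep : i2dsStep (0, 0) p1 = (0, p1) := by
      unfold i2dsStep; rw [if_neg (by simp; linarith)]; simp
    rw [hload, hstep, fold_all_fit rest (0, p1) hrpos (by rw [hrsum]; simp; linarith)]
    have hmax : max (6:ℝ) p1 = p1 := max_eq_right (by linarith)
    rw [hmax]
    simp only [hrsum]
    apply max_le <;> linarith
  · -- 5 < p1 ≤ 7
    have hstep : i2dsStep (0, 0) p1 = (p1, 0) := by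
      unfold i2dsStep; rw [if_pos (by simpa using h7)]; simp
    rw [hload, hstep]
    have h1le : (rest.foldl i2dsStep (p1, 0)).1 ≤ 7 := fold_fst_le rest _ (by simpa using h7)
    have h1ge : p1 ≤ (rest.foldl i2dsStep (p1, 0)).1 := fold_fst_ge rest (p1, 0) hrpos
    have hs := fold_sum rest (p1, 0)
    rw [hrsum] at hs; simp at hs
    have hrhs : (7:ℝ) ≤ (7 / 6) * max 6 p1 := by
      have : (6:ℝ) ≤ max 6 p1 := le_max_left _ _
      linarith
    apply max_le <;> linarith
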